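/- Let T be a left continuous t-norm on [0,1] and L a right continuous L-operation on [0,∞]. Then (L⊗T)(f,g) is non-defective for all non-defective d.d.f.'s f, g if and only if L has no zero divisor, i.e., L(x,y) = ∞ implies x = ∞ or y = ∞. -/

import Mathlib

open ENNReal Set

/-- A distance distribution function: increasing `f : [0,∞] → [0,1]` with
`f 0 = 0`, `f ∞ = 1`, left continuous on `(0,∞)`. -/
def IsDDF (f : ℝ≥0∞ → ℝ≥0∞) : Prop :=
  Monotone f ∧ (∀ x, f x ≤ 1) ∧ f 0 = 0 ∧ f ⊤ = 1 ∧
    ∀ x : ℝ≥0∞, 0 < x → x < ⊤ → f x = ⨆ y ∈ Set.Iio x, f y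

/-- The largest quasi-inverse `f∨ y = inf {x | f x > y}`. -/
noncomputable def qInv (f : ℝ≥0∞ → ℝ≥0∞) : ℝ≥0∞ → ℝ≥0∞ :=
  fun y => sInf {x | y < f x}

/-- The unit interval `[0,1]` inside `[0,∞]`. -/
def I01 : Set ℝ≥0∞ := Set.Icc 0 1

/-- A left continuous t-norm on `[0,1]`: commutative, associative, increasing in each
place, identity `1`, left continuous in each variable. -/
def IsLeftContTNorm (T : ℝ≥0∞ → ℝ≥0∞ → ℝ≥0∞) : Prop :=
  (∀ p ∈ I01, ∀ q ∈ I01, T p q ∈ I01) ∧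
  (∀ p ∈ I01, ∀ q ∈ I01, T p q = T q p) ∧
  (∀ p ∈ I01, ∀ q ∈ I01, ∀ r ∈ I01, T (T p q) r = T p (T q r)) ∧
  (∀ p ∈ I01, T p 1 = p) ∧
  (∀ q ∈ I01, ∀ p₁ ∈ I01, ∀ p₂ ∈ I01, p₁ ≤ p₂ → T p₁ q ≤ T p₂ q) ∧
  (∀ q ∈ I01, ∀ p ∈ I01, 0 < p → T p q = ⨆ p' ∈ Set.Iio p, T p' q)

/-- A right continuous `L`-operation on `[0,∞]`: commutative, associative, increasing in
each place, identity `0`, right continuous in each variable. -/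
def IsRightContLOp (L : ℝ≥0∞ → ℝ≥0∞ → ℝ≥0∞) : Prop :=
  (∀ x y, L x y = L y x) ∧
  (∀ x y z, L (L x y) z = L x (L y z)) ∧
  (∀ x, L x 0 = x) ∧
  (∀ y x₁ x₂, x₁ ≤ x₂ → L x₁ y ≤ L x₂ y) ∧
  (∀ y x, x < ⊤ → L x y = ⨅ x' ∈ Set.Ioi x, L x' y)

/-- Joint continuity of a t-norm on `[0,1] × [0,1]`. -/
def TNormContinuous (T : ℝ≥0∞ → ℝ≥0∞ → ℝ≥0∞) : Prop :=
  ContinuousOn (fun pq : ℝ≥0∞ × ℝ≥0∞ => T pq.1 pq.2) (I01 ×ˢ I01)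

/-- The tensor-product triangle function:
`(L ⊗ T)(f,g)(x) = sup {T (f r) (g s) | L r s < x}` for `x < ∞`, and `1` at `∞`. -/
noncomputable def tensor (L T : ℝ≥0∞ → ℝ≥0∞ → ℝ≥0∞) (f g : ℝ≥0∞ → ℝ≥0∞) :
    ℝ≥0∞ → ℝ≥0∞ :=
  fun x => if x = ⊤ then 1 else ⨆ r, ⨆ s, ⨆ _ : L r s < x, T (f r) (g s)

/-- A d.d.f. is non-defective if `sup_{x<∞} f x = 1`. -/
def NonDefective (f : ℝ≥0∞ → ℝ≥0∞) : Prop :=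
  (⨆ x ∈ Set.Iio (⊤ : ℝ≥0∞), f x) = 1

lemma mem_I01' {p : ℝ≥0∞} (h : p ≤ 1) : p ∈ I01 := ⟨zero_le, h⟩

lemma step_isDDF {a : ℝ≥0∞} (ha : a < ⊤) :
    IsDDF (fun r => if a < r then 1 else 0) := by
  refine ⟨?_, ?_, ?_, ?_, ?_⟩
  · intro u v huv
    by_cases h : a < u
    · simp [h, lt_of_lt_of_le h huv]
    · by_cases h' : a < v <;> simp [h, h']
  · intro x; dsimp only; split <;> simp
  · simp
  · simp [ha]
  · intro v hv0 hvt
    by_cases h : a < v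
    · obtain ⟨y, hay, hyv⟩ := exists_between h
      simp only [h, if_true]
      apply le_antisymm
      · refine le_trans ?_
          (le_iSup₂ (f := fun y (_ : y ∈ Iio v) => if a < y then (1:ℝ≥0∞) else 0) y hyv)
        simp [hay]
      · exact iSup₂_le fun y _ => by split <;> simp
    · simp only [h, if_false]
      symm
      apply le_antisymm _ (zero_le)
      refine iSup₂_le fun y hy => ?_
      have : ¬ a < y := fun hay => h (hay.trans hy)
      simp [this]

lemma step_nonDefective {a : ℝ≥0∞} (ha : a < ⊤) :
    NonDefective (fun r => if a < r then 1 else 0) := by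
  obtain ⟨v, hav, hvt⟩ := exists_between ha
  apply le_antisymm
  · exact iSup₂_le fun y _ => by dsimp only; split <;> simp
  · refine le_trans ?_
      (le_iSup₂ (f := fun y (_ : y ∈ Iio ⊤) => if a < y then (1:ℝ≥0∞) else 0) v hvt)
    simp [hav]

theorem tensor_nondefective_iff_no_zero_divisor (T L : ℝ≥0∞ → ℝ≥0∞ → ℝ≥0∞)
    (hT : IsLeftContTNorm T) (hL : IsRightContLOp L) :
    (∀ f g : ℝ≥0∞ → ℝ≥0∞, IsDDF f → IsDDF g → NonDefective f → NonDefective g →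
      NonDefective (tensor L T f g)) ↔
    (∀ x y : ℝ≥0∞, L x y = ⊤ → x = ⊤ ∨ y = ⊤) := by
  obtain ⟨hTmem, hTcomm, _hTassoc, hTid, hTmono, hTlc⟩ := hT
  obtain ⟨hLcomm, _hLassoc, _hLid, hLmono, _hLrc⟩ := hL
  have h1 : (1:ℝ≥0∞) ∈ I01 := mem_I01' le_rfl
  have h0 : (0:ℝ≥0∞) ∈ I01 := mem_I01' zero_le_one
  have hT0 : ∀ q ∈ I01, T 0 q = 0 := by
    intro q hq
    have h1' : T q 0 ≤ T 1 0 := hTmono 0 h0 q hq 1 h1 hq.2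
    have h2' : T 1 0 = 0 := by rw [hTcomm 1 h1 0 h0, hTid 0 h0]
    have h3' : T 0 q = T q 0 := hTcomm 0 h0 q hq
    have h4' : T 0 q ≤ 0 := by
      calc T 0 q = T q 0 := h3'
        _ ≤ T 1 0 := h1'
        _ = 0 := h2'
    exact le_antisymm h4' (zero_le)
  constructor
  · intro H x y hxy
    by_contra hc
    push_neg at hc
    obtain ⟨hx, hy⟩ := hc
    have hx' : x < ⊤ := lt_top_iff_ne_top.mpr hx
    have hy' : y < ⊤ := lt_top_iff_ne_top.mpr hy
    set f := fun r => if x < r then (1:ℝ≥0∞) else 0 with hfdef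
    set g := fun s => if y < s then (1:ℝ≥0∞) else 0 with hgdef
    have hnd : NonDefective (tensor L T f g) :=
      H f g (step_isDDF hx') (step_isDDF hy') (step_nonDefective hx') (step_nonDefective hy')
    have hfr : ∀ r, f r ∈ I01 := by
      intro r; refine mem_I01' ?_; simp only [hfdef]; split <;> simp
    have hgr : ∀ s, g s ∈ I01 := by
      intro s; refine mem_I01' ?_; simp only [hgdef]; split <;> simp
    have hzero : ∀ z ∈ Iio (⊤:ℝ≥0∞), tensor L T f g z = 0 := by
      intro z hz
      have hz' : z ≠ ⊤ := ne_of_lt hz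
      simp only [tensor, hz', if_false]
      apply le_antisymm _ (zero_le)
      refine iSup_le fun r => iSup_le fun s => iSup_le fun hrs => ?_
      by_cases hr : x < r
      · by_cases hs : y < s
        · exfalso
          have hle : L x y ≤ L r s := by
            refine le_trans (hLmono y x r hr.le) ?_
            rw [hLcomm r y, hLcomm r s]
            exact hLmono r y s hs.le
          rw [hxy] at hle
          exact absurd (lt_of_le_of_lt hle hrs) (by simp)
        · have hgs : g s = 0 := by simp [hgdef, hs]
          rw [hgs, hTcomm (f r) (hfr r) 0 h0, hT0 (f r) (hfr r)]
      · have hfr0 : f r = 0 := by simp [hfdef, hr]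
        rw [hfr0, hT0 (g s) (hgr s)]
    have hsup : (⨆ z ∈ Iio (⊤:ℝ≥0∞), tensor L T f g z) = 0 := by
      apply le_antisymm _ (zero_le)
      exact iSup₂_le fun z hz => (hzero z hz).le
    have : (0:ℝ≥0∞) = 1 := by rw [← hsup]; exact hnd
    exact zero_ne_one this
  · intro H f g hf hg hfn hgn
    obtain ⟨hfm, hfle, -, -, -⟩ := hf
    obtain ⟨hgm, hgle, -, -, -⟩ := hg
    have hfr : ∀ r, f r ∈ I01 := fun r => mem_I01' (hfle r)
    have hgr : ∀ s, g s ∈ I01 := fun s => mem_I01' (hgle s)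
    show (⨆ x ∈ Set.Iio (⊤:ℝ≥0∞), tensor L T f g x) = 1
    apply le_antisymm
    · refine iSup₂_le fun z _ => ?_
      simp only [tensor]
      split
      · exact le_rfl
      · exact iSup_le fun r => iSup_le fun s => iSup_le fun _ => (hTmem _ (hfr r) _ (hgr s)).2
    · have key : ∀ r, r < ⊤ → ∀ s, s < ⊤ →
          T (f r) (g s) ≤ ⨆ z ∈ Iio (⊤:ℝ≥0∞), tensor L T f g z := by
        intro r hr s hs
        have hLrs : L r s ≠ ⊤ := by
          intro h
          rcases H r s h with h' | h'
          · exact absurd h' (ne_of_lt hr)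
          · exact absurd h' (ne_of_lt hs)
        have hzt : L r s + 1 < ⊤ :=
          ENNReal.add_lt_top.mpr ⟨lt_top_iff_ne_top.mpr hLrs, ENNReal.one_lt_top⟩
        have hlt : L r s < L r s + 1 := ENNReal.lt_add_right hLrs one_ne_zero
        calc T (f r) (g s) ≤ tensor L T f g (L r s + 1) := by
              simp only [tensor, ne_of_lt hzt, if_false]
              exact le_iSup_of_le r (le_iSup_of_le s (le_iSup_of_le hlt le_rfl))
          _ ≤ _ := le_iSup₂ (f := fun z (_ : z ∈ Iio (⊤:ℝ≥0∞)) => tensor L T f g z)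
                     (L r s + 1) hzt
      have step : ∀ s, g s ≤ ⨆ r ∈ Iio (⊤:ℝ≥0∞), T (f r) (g s) := by
        intro s
        have h1s : T 1 (g s) = g s := by rw [hTcomm 1 h1 (g s) (hgr s), hTid (g s) (hgr s)]
        have hlc := hTlc (g s) (hgr s) 1 h1 zero_lt_one
        have main : (⨆ p' ∈ Iio (1:ℝ≥0∞), T p' (g s)) ≤ ⨆ r ∈ Iio (⊤:ℝ≥0∞), T (f r) (g s) := by
          refine iSup₂_le fun p' hp' => ?_
          have hp'I : p' ∈ I01 := mem_I01' (le_of_lt hp')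
          have hlt : p' < ⨆ r ∈ Iio (⊤:ℝ≥0∞), f r := by
            rw [hfn]; exact hp'
          simp only [lt_iSup_iff] at hlt
          obtain ⟨r, hrt, hpr⟩ := hlt
          refine le_trans (hTmono (g s) (hgr s) p' hp'I (f r) (hfr r) hpr.le) ?_
          exact le_iSup₂ (f := fun r (_ : r ∈ Iio (⊤:ℝ≥0∞)) => T (f r) (g s)) r hrt
        calc g s = T 1 (g s) := h1s.symm
          _ = ⨆ p' ∈ Iio (1:ℝ≥0∞), T p' (g s) := hlc
          _ ≤ _ := main
      calc (1:ℝ≥0∞) = ⨆ s ∈ Iio (⊤:ℝ≥0∞), g s := hgn.symm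
        _ ≤ ⨆ s ∈ Iio (⊤:ℝ≥0∞), ⨆ r ∈ Iio (⊤:ℝ≥0∞), T (f r) (g s) :=
            iSup₂_le fun s hs => le_trans (step s)
              (le_iSup₂ (f := fun s (_ : s ∈ Iio (⊤:ℝ≥0∞)) =>
                ⨆ r ∈ Iio (⊤:ℝ≥0∞), T (f r) (g s)) s hs)
        _ ≤ ⨆ z ∈ Iio (⊤:ℝ≥0∞), tensor L T f g z :=
            iSup₂_le fun s hs => iSup₂_le fun r hr => key r hr s hs
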